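/- There exist elements x, y, z of PSL(2,𝔽₁₁), each of order exactly 11, with x·y·z = 1 and such that {x, y, z} generates PSL(2,𝔽₁₁); that is, (0; 11, 11, 11) is a signature of PSL(2,𝔽₁₁). -/

import Mathlib

open Matrix

instance : Fact (Nat.Prime 11) := ⟨by norm_num⟩

abbrev SL11 := Matrix.SpecialLinearGroup (Fin 2) (ZMod 11)

def E12 (a : ZMod 11) : SL11 := ⟨!![1,a;0,1], by simp [Matrix.det_fin_two_of]⟩
def E21 (a : ZMod 11) : SL11 := ⟨!![1,0;a,1], by simp [Matrix.det_fin_two_of]⟩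

lemma E12_mul (a b : ZMod 11) : E12 a * E12 b = E12 (a+b) := by
  ext i j
  rw [Matrix.SpecialLinearGroup.coe_mul]
  fin_cases i <;> fin_cases j <;>
    simp [E12, Matrix.mul_apply, Fin.sum_univ_succ, add_comm]

lemma E21_mul (a b : ZMod 11) : E21 a * E21 b = E21 (a+b) := by
  ext i j
  rw [Matrix.SpecialLinearGroup.coe_mul]
  fin_cases i <;> fin_cases j <;>
    simp [E21, Matrix.mul_apply, Fin.sum_univ_succ, add_comm]

lemma E12_pow (a : ZMod 11) (n : ℕ) : E12 a ^ n = E12 (n * a) := by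
  induction n with
  | zero => ext i j; rw [pow_zero]; fin_cases i <;> fin_cases j <;> simp [E12]
  | succ n ih => rw [pow_succ, ih, E12_mul]; congr 1; push_cast; ring

lemma E21_pow (a : ZMod 11) (n : ℕ) : E21 a ^ n = E21 (n * a) := by
  induction n with
  | zero => ext i j; rw [pow_zero]; fin_cases i <;> fin_cases j <;> simp [E21]
  | succ n ih => rw [pow_succ, ih, E21_mul]; congr 1; push_cast; ring

lemma E12_mem (a : ZMod 11) : E12 a ∈ Subgroup.closure {E12 1, E21 7} := by
  have h1 : E12 1 ∈ Subgroup.closure ({E12 1, E21 7} : Set SL11) :=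
    Subgroup.subset_closure (by simp)
  have : E12 a = E12 1 ^ a.val := by
    rw [E12_pow, mul_one, ZMod.natCast_val, ZMod.cast_id]
  rw [this]; exact pow_mem h1 _

lemma E21_mem (a : ZMod 11) : E21 a ∈ Subgroup.closure {E12 1, E21 7} := by
  have h1 : E21 7 ∈ Subgroup.closure ({E12 1, E21 7} : Set SL11) :=
    Subgroup.subset_closure (by simp)
  have : E21 a = E21 7 ^ (8*a).val := by
    rw [E21_pow, ZMod.natCast_val, ZMod.cast_id]
    congr 1
    have h56 : (8 : ZMod 11) * 7 = 1 := by decide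
    rw [mul_comm 8 a, mul_assoc, h56, mul_one]
  rw [this]; exact pow_mem h1 _

lemma factor (a b c d : ZMod 11) (hc : c ≠ 0) (hdet : a*d - b*c = 1) :
    (!![a,b;c,d] : Matrix (Fin 2) (Fin 2) (ZMod 11)) =
      !![1,(a-1)*c⁻¹;0,1] * !![1,0;c,1] * !![1,(d-1)*c⁻¹;0,1] := by
  ext i j
  fin_cases i <;> fin_cases j <;>
    · simp only [Matrix.mul_apply, Fin.sum_univ_succ, Fin.sum_univ_zero, Matrix.cons_val',
        Matrix.cons_val_zero, Matrix.cons_val_one, Matrix.head_cons, Matrix.head_fin_const,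
        Matrix.empty_val', Matrix.cons_val_fin_one, Fin.zero_eta, Fin.mk_one, Matrix.of_apply, Fin.succ_zero_eq_one]
      field_simp
      try ring
      try linear_combination hdet
      try linear_combination -hdet
      try linear_combination d * hdet

lemma mem_of_ne (M : SL11) (hc : M.1 1 0 ≠ 0) :
    M ∈ Subgroup.closure {E12 1, E21 7} := by
  have hdet : M.1 0 0 * M.1 1 1 - M.1 0 1 * M.1 1 0 = 1 := by
    have := M.2; rwa [Matrix.det_fin_two] at this
  have key : M = E12 ((M.1 0 0 - 1) * (M.1 1 0)⁻¹) * E21 (M.1 1 0) *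
      E12 ((M.1 1 1 - 1) * (M.1 1 0)⁻¹) := by
    apply Subtype.ext
    rw [Matrix.SpecialLinearGroup.coe_mul, Matrix.SpecialLinearGroup.coe_mul]
    simp only [Matrix.SpecialLinearGroup.coe_mul, E12, E21]
    rw [← factor _ _ _ _ hc hdet]
    exact Matrix.eta_fin_two M.1
  rw [key]
  exact mul_mem (mul_mem (E12_mem _) (E21_mem _)) (E12_mem _)

lemma E21_zero : E21 0 = 1 := by
  ext i j; fin_cases i <;> fin_cases j <;> simp [E21]

lemma closure_AB_eq_top : Subgroup.closure ({E12 1, E21 7} : Set SL11) = ⊤ := by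
  rw [Subgroup.eq_top_iff']
  intro M
  by_cases hc : M.1 1 0 ≠ 0
  · exact mem_of_ne M hc
  · push_neg at hc
    have hd : M.1 1 1 ≠ 0 := by
      intro hd
      have := M.2
      rw [Matrix.det_fin_two, hc, hd] at this
      simp at this
    have h1 : (M * E21 1).1 1 0 ≠ 0 := by
      have : (M * E21 1).1 1 0 = M.1 1 0 * 1 + M.1 1 1 * 1 := by
        rw [Matrix.SpecialLinearGroup.coe_mul]
        simp [E21, Matrix.mul_apply, Fin.sum_univ_succ]
      rw [this, hc]; simpa using hd
    have hM : M = (M * E21 1) * E21 (-1) := by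
      rw [mul_assoc, E21_mul]
      norm_num [E21_zero]
    rw [hM]
    exact mul_mem (mem_of_ne _ h1) (E21_mem _)

/-- `(0; 11, 11, 11)` is a signature of `PSL(2, 𝔽₁₁)`. -/
theorem signature_0_11_11_11_PSL2_F11 :
    ∃ x y z : Matrix.ProjectiveSpecialLinearGroup (Fin 2) (ZMod 11),
      orderOf x = 11 ∧ orderOf y = 11 ∧ orderOf z = 11 ∧ x * y * z = 1 ∧
      Subgroup.closure {x, y, z} = ⊤ := by
  let π : SL11 →* Matrix.ProjectiveSpecialLinearGroup (Fin 2) (ZMod 11) :=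
    QuotientGroup.mk' _
  have hπ : Function.Surjective π := QuotientGroup.mk'_surjective _
  set A := E12 1 with hA
  set B := E21 7 with hB
  refine ⟨π A, π B, (π A * π B)⁻¹, ?_, ?_, ?_, by group, ?_⟩
  · -- orderOf (π A) = 11
    apply orderOf_eq_prime
    · rw [← _root_.map_pow]
      have : A ^ 11 = 1 := by
        apply Subtype.ext
        show (A^11 : SL11).1 = 1
        rw [Matrix.SpecialLinearGroup.coe_pow]
        show (!![1,1;0,1] : Matrix (Fin 2) (Fin 2) (ZMod 11))^11 = 1
        decide
      rw [this, _root_.map_one]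
    · intro h
      have hA' : A ∈ Subgroup.center SL11 := (QuotientGroup.eq_one_iff A).mp h
      have := Subgroup.mem_center_iff.mp hA' B
      have := congrArg Subtype.val this
      rw [Matrix.SpecialLinearGroup.coe_mul, Matrix.SpecialLinearGroup.coe_mul] at this
      revert this
      show ¬ ((!![1,0;7,1] : Matrix (Fin 2) (Fin 2) (ZMod 11)) * !![1,1;0,1] = !![1,1;0,1] * !![1,0;7,1])
      decide
  · -- orderOf (π B) = 11
    apply orderOf_eq_prime
    · rw [← _root_.map_pow]
      have : B ^ 11 = 1 := by
        apply Subtype.ext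
        rw [Matrix.SpecialLinearGroup.coe_pow]
        show (!![1,0;7,1] : Matrix (Fin 2) (Fin 2) (ZMod 11))^11 = 1
        decide
      rw [this, _root_.map_one]
    · intro h
      have hB' : B ∈ Subgroup.center SL11 := (QuotientGroup.eq_one_iff B).mp h
      have := Subgroup.mem_center_iff.mp hB' A
      have := congrArg Subtype.val this
      rw [Matrix.SpecialLinearGroup.coe_mul, Matrix.SpecialLinearGroup.coe_mul] at this
      revert this
      show ¬ ((!![1,1;0,1] : Matrix (Fin 2) (Fin 2) (ZMod 11)) * !![1,0;7,1] = !![1,0;7,1] * !![1,1;0,1])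
      decide
  · -- orderOf (π A * π B)⁻¹ = 11
    rw [orderOf_inv, ← _root_.map_mul]
    apply orderOf_eq_prime
    · rw [← _root_.map_pow]
      have hmem : (A * B) ^ 11 ∈ Subgroup.center SL11 := by
        rw [Subgroup.mem_center_iff]
        intro g
        apply Subtype.ext
        rw [Matrix.SpecialLinearGroup.coe_mul, Matrix.SpecialLinearGroup.coe_mul,
          Matrix.SpecialLinearGroup.coe_pow]
        have hAB : ((A * B : SL11) : Matrix (Fin 2) (Fin 2) (ZMod 11)) ^ 11 = -1 := by
          rw [Matrix.SpecialLinearGroup.coe_mul]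
          show (!![1,1;0,1] * !![1,0;7,1] : Matrix (Fin 2) (Fin 2) (ZMod 11))^11 = -1
          decide
        rw [hAB]
        simp
      exact (QuotientGroup.eq_one_iff _).mpr hmem
    · intro h
      have hC : A * B ∈ Subgroup.center SL11 := (QuotientGroup.eq_one_iff _).mp h
      have := Subgroup.mem_center_iff.mp hC A
      have := congrArg Subtype.val this
      simp only [Matrix.SpecialLinearGroup.coe_mul] at this
      revert this
      show ¬ ((!![1,1;0,1] : Matrix (Fin 2) (Fin 2) (ZMod 11)) * (!![1,1;0,1] * !![1,0;7,1])
        = !![1,1;0,1] * !![1,0;7,1] * !![1,1;0,1])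
      decide
  · -- closure = ⊤
    rw [← top_le_iff]
    have himg : Subgroup.closure ({π A, π B} :
        Set (Matrix.ProjectiveSpecialLinearGroup (Fin 2) (ZMod 11))) = ⊤ := by
      have : ({π A, π B} : Set _) = π '' {A, B} := by
        rw [Set.image_insert_eq, Set.image_singleton]
      rw [this, ← MonoidHom.map_closure, closure_AB_eq_top]
      exact Subgroup.map_top_of_surjective π hπ
    rw [← himg]
    apply Subgroup.closure_mono
    intro u hu
    rcases hu with h | h
    · exact Or.inl h
    · exact Or.inr (Or.inl h)
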